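/- With the setup of the rtop operator as above, the total variance satisfies E‖v − y‖² = ((d−k₁−k₂)/k₂) · Σ_{ℓ=k₁+1}^d y_ℓ², i.e., the variance of the random sparsifier equals (d−k₁−k₂)/k₂ times the squared norm of the tail coordinates of y. -/

import Mathlib

open Finset

lemma aux_card_mem {α : Type*} [DecidableEq α] (t : Finset α) (a : α) (ha : a ∈ t)
    (k : ℕ) (hk : 1 ≤ k) :
    ((t.powersetCard k).filter (fun S => a ∈ S)).card = (t.card - 1).choose (k - 1) := by
  rw [← Finset.card_erase_of_mem ha, ← Finset.card_powersetCard (k - 1) (t.erase a)]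
  refine Finset.card_bij' (fun S _ => S.erase a) (fun S _ => insert a S) ?_ ?_ ?_ ?_
  · intro S hS
    simp only [Finset.mem_filter, Finset.mem_powersetCard] at hS ⊢
    exact ⟨Finset.erase_subset_erase a hS.1.1, by rw [Finset.card_erase_of_mem hS.2, hS.1.2]⟩
  · intro S hS
    simp only [Finset.mem_powersetCard] at hS
    have haS : a ∉ S := fun h => (Finset.notMem_erase a t) (hS.1 h)
    simp only [Finset.mem_filter, Finset.mem_powersetCard]
    refine ⟨⟨Finset.insert_subset ha (hS.1.trans (Finset.erase_subset a t)), ?_⟩,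
      Finset.mem_insert_self a S⟩
    rw [Finset.card_insert_of_notMem haS, hS.2]
    omega
  · intro S hS
    simp only [Finset.mem_filter] at hS
    exact Finset.insert_erase hS.2
  · intro S hS
    simp only [Finset.mem_powersetCard] at hS
    exact Finset.erase_insert (fun h => (Finset.notMem_erase a t) (hS.1 h))

/-- Total variance of the `rtop_{k₁,k₂}` operator:
`E‖v - y‖² = ((d-k₁-k₂)/k₂) Σ_{ℓ>k₁} y_ℓ²`. -/
theorem stmt_6 (d k₁ k₂ : ℕ) (hk₂ : 1 ≤ k₂) (hk : k₁ + k₂ ≤ d)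
    (y : Fin d → ℝ) :
    let T := (Finset.univ : Finset (Fin d)).filter (fun ℓ : Fin d => k₁ ≤ (ℓ : ℕ))
    let 𝒮 := T.powersetCard k₂
    let v : Finset (Fin d) → Fin d → ℝ := fun S ℓ =>
      y ℓ * ((if (ℓ : ℕ) < k₁ then (1 : ℝ) else 0) +
        (((d : ℝ) - k₁) / k₂) * (if ℓ ∈ S then (1 : ℝ) else 0))
    ((𝒮.card : ℝ)⁻¹) * ∑ S ∈ 𝒮, (∑ ℓ, (v S ℓ - y ℓ) ^ 2) =
      (((d : ℝ) - k₁ - k₂) / k₂) * ∑ ℓ ∈ T, (y ℓ) ^ 2 := by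
  intro T 𝒮 v
  have hTcard : T.card = d - k₁ := by
    have himg : Finset.image Fin.val T = Finset.Ico k₁ d := by
      ext n
      simp only [T, Finset.mem_image, Finset.mem_filter, Finset.mem_univ, true_and,
        Finset.mem_Ico]
      constructor
      · rintro ⟨i, hi, rfl⟩; exact ⟨hi, i.isLt⟩
      · rintro ⟨h1, h2⟩; exact ⟨⟨n, h2⟩, h1, rfl⟩
    calc T.card = (Finset.image Fin.val T).card :=
          (Finset.card_image_of_injective _ Fin.val_injective).symm
      _ = d - k₁ := by rw [himg, Nat.card_Ico]
  set m : ℕ := d - k₁ with hm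
  have hmk : k₂ ≤ m := by omega
  have hm1 : 1 ≤ m := le_trans hk₂ hmk
  have hC : 𝒮.card = m.choose k₂ := by rw [Finset.card_powersetCard, hTcard]
  have hCpos : 0 < m.choose k₂ := Nat.choose_pos hmk
  -- key choose identity
  have hkey : (m : ℝ) * ((m - 1).choose (k₂ - 1) : ℝ) = (m.choose k₂ : ℝ) * k₂ := by
    have := Nat.add_one_mul_choose_eq (m - 1) (k₂ - 1)
    have hm' : m - 1 + 1 = m := by omega
    have hk' : k₂ - 1 + 1 = k₂ := by omega
    rw [hm', hk'] at this
    exact_mod_cast congrArg (Nat.cast : ℕ → ℝ) this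
  have hdk₁ : ((d : ℝ) - k₁) = (m : ℝ) := by
    have : (d : ℝ) = (m : ℝ) + (k₁ : ℝ) := by
      have : d = m + k₁ := by omega
      exact_mod_cast congrArg (Nat.cast : ℕ → ℝ) this
    linarith
  set c : ℝ := ((d : ℝ) - k₁) / k₂ with hc
  set N : ℕ := (m - 1).choose (k₂ - 1) with hN
  set C : ℕ := m.choose k₂ with hCdef
  have hNCnat : N ≤ C := by
    rw [hN, hCdef]
    calc (m-1).choose (k₂-1) = (𝒮.filter (fun S => (⟨k₁, by omega⟩ : Fin d) ∈ S)).card := by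
          rw [← hTcard]
          exact (aux_card_mem T ⟨k₁, by omega⟩ (by simp [T]) k₂ hk₂).symm
      _ ≤ 𝒮.card := Finset.card_filter_le _ _
      _ = m.choose k₂ := hC
  have hcast : ((C - N : ℕ) : ℝ) = (C : ℝ) - (N : ℝ) := Nat.cast_sub hNCnat
  -- per-coordinate sums
  rw [Finset.sum_comm]
  have hinner : ∀ ℓ : Fin d, (∑ S ∈ 𝒮, (v S ℓ - y ℓ) ^ 2)
      = if ℓ ∈ T then (y ℓ)^2 * ((c - 1)^2 * N + (C - N)) else 0 := by
    intro ℓ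
    by_cases hℓ : ℓ ∈ T
    · have hℓk : ¬ ((ℓ : ℕ) < k₁) := by
        simp only [T, Finset.mem_filter] at hℓ; omega
      have hNℓ : (𝒮.filter (fun S => ℓ ∈ S)).card = N := by
        rw [hN, ← hTcard]; exact aux_card_mem T ℓ hℓ k₂ hk₂
      have hNℓ' : (𝒮.filter (fun S => ℓ ∉ S)).card = C - N := by
        have := Finset.card_filter_add_card_filter_not (s := 𝒮)
          (p := fun S => ℓ ∈ S)
        rw [hNℓ, hC] at this
        omega
      rw [← Finset.sum_filter_add_sum_filter_not 𝒮 (fun S => ℓ ∈ S)]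
      have h1 : ∑ S ∈ 𝒮.filter (fun S => ℓ ∈ S), (v S ℓ - y ℓ) ^ 2
          = N * ((y ℓ) * (c - 1))^2 := by
        rw [Finset.sum_congr rfl (fun S hS => ?_), Finset.sum_const, hNℓ, nsmul_eq_mul]
        simp only [Finset.mem_filter] at hS
        simp only [v, if_neg hℓk, if_pos hS.2]
        ring
      have h2 : ∑ S ∈ 𝒮.filter (fun S => ℓ ∉ S), (v S ℓ - y ℓ) ^ 2
          = (C - N : ℕ) * (y ℓ)^2 := by
        rw [Finset.sum_congr rfl (fun S hS => ?_), Finset.sum_const, hNℓ', nsmul_eq_mul]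
        simp only [Finset.mem_filter] at hS
        simp only [v, if_neg hℓk, if_neg hS.2]
        ring
      rw [h1, h2, if_pos hℓ, hcast]
      ring
    · have hℓk : (ℓ : ℕ) < k₁ := by
        simp only [T, Finset.mem_filter, Finset.mem_univ, true_and, not_le] at hℓ; exact hℓ
      rw [if_neg hℓ]
      refine Finset.sum_eq_zero (fun S hS => ?_)
      have hℓS : ℓ ∉ S := by
        simp only [𝒮, Finset.mem_powersetCard] at hS
        intro h
        have := hS.1 h
        simp only [T, Finset.mem_filter] at this
        omega
      simp only [v, if_pos hℓk, if_neg hℓS]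
      ring
  rw [Finset.sum_congr rfl (fun ℓ _ => hinner ℓ), Finset.sum_ite_mem,
    Finset.univ_inter, ← Finset.sum_mul, hC]
  have hdkk : ((d : ℝ) - k₁ - k₂) = (m : ℝ) - k₂ := by rw [hdk₁]
  have hCne : ((C : ℕ) : ℝ) ≠ 0 := by positivity
  have hk₂ne : (k₂ : ℝ) ≠ 0 := by positivity
  have hmne : (m : ℝ) ≠ 0 := by positivity
  have hfactor : ((m.choose k₂ : ℕ) : ℝ)⁻¹ * ((c - 1)^2 * N + ((C : ℝ) - N))
      = ((m : ℝ) - k₂) / k₂ := by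
    have hCC : ((m.choose k₂ : ℕ) : ℝ) = (C : ℝ) := by rw [hCdef]
    rw [hCC, hc, hdk₁]
    field_simp
    ring_nf
    nlinarith [hkey, sq_nonneg ((m:ℝ) - k₂)]
  rw [hdkk, ← hfactor]
  ring
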